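/- Let r be an integer with 1 ≤ r ≤ q and gcd(r,q) = 1, and for j = 1, 2 let H_j = ⌊(a_j l − (l−m)⟨b_j r⟩_{a_j})/(a_j(l−m))⌋. Fix j ∈ {1,2} with H_j ≥ 1 and a positive integer n. Then for every integer i with 1 ≤ i ≤ H_j one has a_j m n/(⟨b_j r⟩_{a_j} + a_j(i−1)) ≥ a_j l n/(⟨b_j r⟩_{a_j} + a_j i); consequently, for any integers i₁ ≠ i₂ with 0 ≤ i₁, i₂ ≤ H_j, the intervals ( a_j m n/(⟨b_j r⟩_{a_j}+a_j i₁), a_j l n/(⟨b_j r⟩_{a_j}+a_j i₁) ] and ( a_j m n/(⟨b_j r⟩_{a_j}+a_j i₂), a_j l n/(⟨b_j r⟩_{a_j}+a_j i₂) ] are disjoint. -/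

import Mathlib

/-- `modRep a b` is the smallest positive integer congruent to `b` modulo `a`,
i.e. the unique `s` with `1 ≤ s ≤ a` and `s ≡ b [MOD a]` (for `a, b ≥ 1`),
denoted `⟨b⟩_a` in the paper. -/
def modRep (a b : ℕ) : ℕ := (b - 1) % a + 1

set_option maxHeartbeats 2000000 in
theorem intervals_disjoint (l m : ℕ) (hlm : m < l)
    (a₁ a₂ b₁ b₂ : ℕ) (ha₁ : 0 < a₁) (ha₂ : 0 < a₂) (hb₁ : 0 < b₁) (hb₂ : 0 < b₂)
    (hcop₁ : Nat.gcd a₁ b₁ = 1) (hcop₂ : Nat.gcd a₂ b₂ = 1)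
    (q : ℕ) (hq : q = Nat.lcm a₁ a₂)
    (r : ℕ) (hr : 1 ≤ r) (hrq : r ≤ q) (hgcd : Nat.gcd r q = 1)
    (a b : ℕ) (hj : (a, b) = (a₁, b₁) ∨ (a, b) = (a₂, b₂))
    (s : ℕ) (hs : s = modRep a (b * r))
    (H : ℤ)
    (hH : H = ⌊((a : ℝ) * l - ((l : ℝ) - m) * s) / ((a : ℝ) * ((l : ℝ) - m))⌋)
    (hH1 : 1 ≤ H) (n : ℕ) (hn : 0 < n) :
    (∀ i : ℤ, 1 ≤ i → i ≤ H →
        (a : ℝ) * l * n / ((s : ℝ) + (a : ℝ) * i) ≤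
          (a : ℝ) * m * n / ((s : ℝ) + (a : ℝ) * ((i : ℝ) - 1))) ∧
    (∀ i₁ i₂ : ℤ, 0 ≤ i₁ → i₁ ≤ H → 0 ≤ i₂ → i₂ ≤ H → i₁ ≠ i₂ →
        Disjoint
          (Set.Ioc ((a : ℝ) * m * n / ((s : ℝ) + (a : ℝ) * i₁))
            ((a : ℝ) * l * n / ((s : ℝ) + (a : ℝ) * i₁)))
          (Set.Ioc ((a : ℝ) * m * n / ((s : ℝ) + (a : ℝ) * i₂))
            ((a : ℝ) * l * n / ((s : ℝ) + (a : ℝ) * i₂)))) := by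
  have haa : 0 < a := by rcases hj with h | h <;> simp_all
  have ha : (0:ℝ) < a := by exact_mod_cast haa
  have hs1 : (1:ℝ) ≤ s := by
    have : 1 ≤ s := by rw [hs]; simp [modRep]
    exact_mod_cast this
  have hlm' : (0:ℝ) < (l:ℝ) - m := by
    have : (m:ℝ) < l := by exact_mod_cast hlm
    linarith
  have hn' : (0:ℝ) < n := by exact_mod_cast hn
  have key : ∀ i : ℤ, 1 ≤ i → i ≤ H →
      (a : ℝ) * l * n / ((s : ℝ) + (a : ℝ) * i) ≤
        (a : ℝ) * m * n / ((s : ℝ) + (a : ℝ) * ((i : ℝ) - 1)) := by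
    intro i hi1 hiH
    have hi1' : (1:ℝ) ≤ (i:ℝ) := by exact_mod_cast hi1
    have hd : (0:ℝ) < (a:ℝ) * ((l:ℝ) - m) := mul_pos ha hlm'
    have hfloor : (i:ℝ) ≤ ((a : ℝ) * l - ((l : ℝ) - m) * s) / ((a : ℝ) * ((l : ℝ) - m)) := by
      have h1 : (i:ℝ) ≤ (H:ℝ) := by exact_mod_cast hiH
      have h2 := Int.floor_le (((a : ℝ) * l - ((l : ℝ) - m) * s) / ((a : ℝ) * ((l : ℝ) - m)))
      rw [← hH] at h2
      linarith
    rw [le_div_iff₀ hd] at hfloor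
    have h2 : ((l:ℝ) - m) * ((s:ℝ) + a * i) ≤ (a:ℝ) * l := by nlinarith
    have d1 : (0:ℝ) < (s:ℝ) + a * ((i:ℝ) - 1) := by nlinarith
    have d2 : (0:ℝ) < (s:ℝ) + a * i := by nlinarith
    rw [div_le_div_iff₀ d2 d1]
    nlinarith [mul_le_mul_of_nonneg_left h2 (le_of_lt (mul_pos ha hn'))]
  refine ⟨key, ?_⟩
  have main : ∀ i₁ i₂ : ℤ, 0 ≤ i₁ → i₁ ≤ H → 0 ≤ i₂ → i₂ ≤ H → i₁ < i₂ →
      Disjoint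
        (Set.Ioc ((a : ℝ) * m * n / ((s : ℝ) + (a : ℝ) * i₁))
          ((a : ℝ) * l * n / ((s : ℝ) + (a : ℝ) * i₁)))
        (Set.Ioc ((a : ℝ) * m * n / ((s : ℝ) + (a : ℝ) * i₂))
          ((a : ℝ) * l * n / ((s : ℝ) + (a : ℝ) * i₂))) := by
    intro i₁ i₂ h10 h1H h20 h2H hlt
    have hi21 : 1 ≤ i₂ := by omega
    have hk := key i₂ hi21 h2H
    have hstep : (a : ℝ) * m * n / ((s : ℝ) + (a : ℝ) * ((i₂:ℝ) - 1)) ≤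
        (a : ℝ) * m * n / ((s : ℝ) + (a : ℝ) * i₁) := by
      have h12 : (i₁:ℝ) ≤ (i₂:ℝ) - 1 := by
        have h' : i₁ + 1 ≤ i₂ := hlt
        have : ((i₁:ℤ):ℝ) + 1 ≤ ((i₂:ℤ):ℝ) := by exact_mod_cast Int.cast_le.mpr h'
        linarith
      have h10' : (0:ℝ) ≤ (i₁:ℝ) := by exact_mod_cast h10
      have d1 : (0:ℝ) < (s:ℝ) + a * i₁ := by nlinarith
      have d2 : (0:ℝ) < (s:ℝ) + a * ((i₂:ℝ) - 1) := by nlinarith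
      rw [div_le_div_iff₀ d2 d1]
      exact mul_le_mul_of_nonneg_left (by nlinarith : (s:ℝ) + a * i₁ ≤ (s:ℝ) + a * ((i₂:ℝ) - 1))
        (show (0:ℝ) ≤ (a:ℝ) * m * n by positivity)
    have hchain : (a : ℝ) * l * n / ((s : ℝ) + (a : ℝ) * i₂) ≤
        (a : ℝ) * m * n / ((s : ℝ) + (a : ℝ) * i₁) := le_trans hk hstep
    rw [Set.disjoint_left]
    intro x hx1 hx2
    exact absurd (le_trans hx2.2 hchain) (not_le.mpr hx1.1)
  intro i₁ i₂ h10 h1H h20 h2H hne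
  rcases lt_or_gt_of_ne hne with h | h
  · exact main i₁ i₂ h10 h1H h20 h2H h
  · exact (main i₂ i₁ h20 h2H h10 h1H h).symm
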